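/- Let f : R^d → R be ρ-weakly convex and let Φ(w) = f(w) + (ρ̂/2)‖w - w_t‖² + λ̂ g(w) with ρ̂ > ρ, λ̂ ≥ 0, g convex, and suppose ŵ_t minimizes Φ over a convex set 𝒳 containing w_t, with λ̂ g(ŵ_t) = 0. Then f(w_t) - f(ŵ_t) - (ρ̂/2)‖w_t - ŵ_t‖² ≥ -λ̂ g(w_t) + ((ρ̂-ρ)/2)‖w_t - ŵ_t‖². -/

import Mathlib

open Filter Topology

lemma norm_combo_sq {E : Type*} [NormedAddCommGroup E] [InnerProductSpace ℝ E]
    (a b : E) (t : ℝ) :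
    ‖(1 - t) • a + t • b‖ ^ 2
      = (1 - t) * ‖a‖ ^ 2 + t * ‖b‖ ^ 2 - t * (1 - t) * ‖a - b‖ ^ 2 := by
  rw [← real_inner_self_eq_norm_sq, ← real_inner_self_eq_norm_sq,
    ← real_inner_self_eq_norm_sq, ← real_inner_self_eq_norm_sq]
  simp only [inner_add_left, inner_add_right, inner_sub_left, inner_sub_right,
    real_inner_smul_left, real_inner_smul_right]
  rw [real_inner_comm b a]
  ring

/-- Strong-convexity gap at the proximal minimizer with complementary
slackness. -/
theorem proximal_gap_bound (d : ℕ)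
    (f g : EuclideanSpace ℝ (Fin d) → ℝ)
    (ρ ρhat lam : ℝ) (hρhat : ρhat > ρ) (hlam : 0 ≤ lam)
    (hf : ConvexOn ℝ Set.univ (fun w => f w + (ρ / 2) * ‖w‖ ^ 2))
    (hg : ConvexOn ℝ Set.univ g)
    (𝒳 : Set (EuclideanSpace ℝ (Fin d))) (h𝒳 : Convex ℝ 𝒳)
    (wt whatt : EuclideanSpace ℝ (Fin d)) (hwt : wt ∈ 𝒳) (hwhatt : whatt ∈ 𝒳)
    (Φ : EuclideanSpace ℝ (Fin d) → ℝ)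
    (hΦ : ∀ w, Φ w = f w + (ρhat / 2) * ‖w - wt‖ ^ 2 + lam * g w)
    (hmin : ∀ y ∈ 𝒳, Φ whatt ≤ Φ y)
    (hcs : lam * g whatt = 0) :
    f wt - f whatt - (ρhat / 2) * ‖wt - whatt‖ ^ 2
      ≥ -(lam * g wt) + ((ρhat - ρ) / 2) * ‖wt - whatt‖ ^ 2 := by
  set E : ℝ := ‖whatt - wt‖ ^ 2 with hE
  have hEnn : 0 ≤ E := by positivity
  have hEwt : ‖wt - whatt‖ ^ 2 = E := by rw [hE, norm_sub_rev]
  have hΦwt : Φ wt = f wt + lam * g wt := by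
    rw [hΦ]; simp
  have hΦwh : Φ whatt = f whatt + (ρhat / 2) * E := by
    rw [hΦ, hcs]; ring
  -- Key step: for all 0 < t ≤ 1, Φ wt - Φ whatt ≥ ((ρhat-ρ)/2)(1-t)E
  have hstep : ∀ t : ℝ, 0 < t → t ≤ 1 →
      ((ρhat - ρ) / 2) * (1 - t) * E ≤ Φ wt - Φ whatt := by
    intro t ht ht1
    have h1t : (0:ℝ) ≤ 1 - t := by linarith
    set y : EuclideanSpace ℝ (Fin d) := (1 - t) • whatt + t • wt with hy
    have hymem : y ∈ 𝒳 := h𝒳 hwhatt hwt h1t ht.le (by ring)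
    have hfc := hf.2 (Set.mem_univ whatt) (Set.mem_univ wt) h1t ht.le (by ring)
    have hgc := hg.2 (Set.mem_univ whatt) (Set.mem_univ wt) h1t ht.le (by ring)
    simp only at hfc hgc
    have hny : ‖y‖ ^ 2 = (1 - t) * ‖whatt‖ ^ 2 + t * ‖wt‖ ^ 2 - t * (1 - t) * E :=
      norm_combo_sq whatt wt t
    have hnyw : ‖y - wt‖ ^ 2 = (1 - t) ^ 2 * E := by
      have : y - wt = (1 - t) • (whatt - wt) := by
        rw [hy]; module
      rw [this, norm_smul, mul_pow, hE]
      simp [abs_of_nonneg h1t]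
    rw [← hy] at hfc hgc
    simp only [smul_eq_mul] at hfc hgc
    have hmin' := hmin y hymem
    rw [hΦ y, hnyw, hΦwh] at hmin'
    have hny' : ρ / 2 * ‖y‖ ^ 2
        = ρ / 2 * ((1 - t) * ‖whatt‖ ^ 2 + t * ‖wt‖ ^ 2 - t * (1 - t) * E) := by
      rw [hny]
    have hgc'' : lam * g y ≤ t * (lam * g wt) := by
      have h1 : lam * g y ≤ lam * ((1 - t) * g whatt + t * g wt) :=
        mul_le_mul_of_nonneg_left hgc hlam
      have h2 : lam * ((1 - t) * g whatt + t * g wt) = t * (lam * g wt) := by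
        linear_combination (1 - t) * hcs
      linarith
    -- combine
    have key : t * (((ρhat - ρ) / 2) * (1 - t) * E)
        ≤ t * (Φ wt - Φ whatt) := by
      rw [hΦwt, hΦwh]
      linarith [hmin', hfc, hgc'', hny']
    have := (mul_le_mul_iff_right₀ ht).mp key
    linarith
  -- limit t → 0
  have hlim : ((ρhat - ρ) / 2) * E ≤ Φ wt - Φ whatt := by
    have htend : Tendsto (fun n : ℕ => ((ρhat - ρ) / 2) * (1 - 1 / (n + 1)) * E)
        atTop (𝓝 (((ρhat - ρ) / 2) * (1 - 0) * E)) := by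
      exact (((tendsto_one_div_add_atTop_nhds_zero_nat).const_sub 1).const_mul
        ((ρhat - ρ) / 2)).mul_const E
    have hbd : ∀ n : ℕ, ((ρhat - ρ) / 2) * (1 - 1 / (n + 1)) * E ≤ Φ wt - Φ whatt := by
      intro n
      apply hstep
      · positivity
      · rw [div_le_one (by positivity)]
        linarith [Nat.cast_nonneg (α := ℝ) n]
    have := le_of_tendsto' htend hbd
    simpa using this
  rw [hΦwt, hΦwh] at hlim
  rw [hEwt]
  linarith
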